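/- Let K be a 3DM instance and σ(K) the associated spanUFP instance. If in a feasible solution of σ(K) exactly 8 tasks have their schedule contained in a single block I, then these 8 tasks are exactly t_L(x_i), t_R(x_i), t_L(y_j), t_R(y_j), t_L(z_k), t_R(z_k), t_L(h_ℓ), t_R(h_ℓ) for some hyperedge h_ℓ = (x_i, y_j, z_k) ∈ E. -/

import Mathlib

/-- `ρ = max {29, 3q}`. -/
def rho (q : ℕ) : ℕ := max 29 (3 * q)

/-- The number `x'_i = iρ + 1` associated to the node `x_i`. -/
def xnum (q i : ℕ) : ℤ := (i : ℤ) * (rho q : ℤ) + 1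

/-- The number `y'_j = jρ² + 2` associated to the node `y_j`. -/
def ynum (q j : ℕ) : ℤ := (j : ℤ) * (rho q : ℤ) ^ 2 + 2

/-- The number `z'_k = kρ³ + 4` associated to the node `z_k`. -/
def znum (q k : ℕ) : ℤ := (k : ℤ) * (rho q : ℤ) ^ 3 + 4

/-- The number `h'_ℓ = -iρ - jρ² - kρ³ - 7` associated to the hyperedge `h_ℓ = (x_i, y_j, z_k)`. -/
def hnum (q : ℕ) (h : ℕ × ℕ × ℕ) : ℤ :=
  -((h.1 : ℤ) * (rho q : ℤ)) - (h.2.1 : ℤ) * (rho q : ℤ) ^ 2 - (h.2.2 : ℤ) * (rho q : ℤ) ^ 3 - 7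

/-- The set `Q(K)` of the `3q + m` integers associated to a 3DM instance `K = (q, E)`. -/
def QK (q : ℕ) (E : Finset (ℕ × ℕ × ℕ)) : Finset ℤ :=
  ((Finset.Icc 1 q).image (xnum q)) ∪ ((Finset.Icc 1 q).image (ynum q)) ∪
    ((Finset.Icc 1 q).image (znum q)) ∪ (E.image (hnum q))

/-- `(q, E)` is a 3DM instance: every hyperedge is a triple of node indices in `{1, …, q}`
(`X`, `Y` and `Z` are identified with `{1, …, q}`). -/
def ValidE (q : ℕ) (E : Finset (ℕ × ℕ × ℕ)) : Prop :=
  ∀ h ∈ E, h.1 ∈ Finset.Icc 1 q ∧ h.2.1 ∈ Finset.Icc 1 q ∧ h.2.2 ∈ Finset.Icc 1 q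

/-- A hypermatching: no two distinct hyperedges share a node. -/
def Matching (M : Finset (ℕ × ℕ × ℕ)) : Prop :=
  ∀ h ∈ M, ∀ h' ∈ M, h ≠ h' → h.1 ≠ h'.1 ∧ h.2.1 ≠ h'.2.1 ∧ h.2.2 ≠ h'.2.2

/-- `μ = 1 + max_{u' ∈ Q(K)} 10|u'|`. -/
def mu (q : ℕ) (E : Finset (ℕ × ℕ × ℕ)) : ℕ :=
  1 + (QK q E).sup (fun u => 10 * u.natAbs)

/-- `A = 5μ + 4`. -/
def Aval (q : ℕ) (E : Finset (ℕ × ℕ × ℕ)) : ℕ := 5 * mu q E + 4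

/-- The path of `σ(K)` has `(2A+1)q - 1` edges; edges are identified with the
integers `0, 1, …, (2A+1)q - 2`. -/
def numEdges (q : ℕ) (E : Finset (ℕ × ℕ × ℕ)) : ℤ := (2 * (Aval q E : ℤ) + 1) * q - 1

/-- The capacity profile of `σ(K)`: within each block of `2A` consecutive edges, the
leftmost `A` edges have capacity `4A + 4` and the rightmost `A` edges have capacity `4A`;
blocks are separated by single edges of capacity `0`. -/
def cap (q : ℕ) (E : Finset (ℕ × ℕ × ℕ)) (e : ℤ) : ℤ :=
  let A : ℤ := (Aval q E : ℤ)
  let r := e % (2 * A + 1)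
  if r < A then 4 * A + 4 else if r < 2 * A then 4 * A else 0

/-- An element `u ∈ X ∪ Y ∪ Z ∪ E` of the 3DM instance. -/
inductive Elem where
  | X : ℕ → Elem
  | Y : ℕ → Elem
  | Z : ℕ → Elem
  | H : ℕ × ℕ × ℕ → Elem
deriving DecidableEq

/-- The number `u' ∈ Q(K)` associated to `u ∈ X ∪ Y ∪ Z ∪ E`. -/
def elemVal (q : ℕ) : Elem → ℤ
  | .X i => xnum q i
  | .Y j => ynum q j
  | .Z k => znum q k
  | .H h => hnum q h

/-- `u` is an actual element of the instance `(q, E)`. -/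
def validElem (q : ℕ) (E : Finset (ℕ × ℕ × ℕ)) : Elem → Prop
  | .X i => i ∈ Finset.Icc 1 q
  | .Y j => j ∈ Finset.Icc 1 q
  | .Z k => k ∈ Finset.Icc 1 q
  | .H h => h ∈ E

/-- A task of `σ(K)` is a pair `(u, s)` with `u ∈ X ∪ Y ∪ Z ∪ E`; `s = true` encodes the
task `t_L(u)` and `s = false` encodes the task `t_R(u)`. All tasks have weight 1. -/
abbrev UTask := Elem × Bool

/-- The length of a task: `t_L(u)` has length `A - 10u'`, `t_R(u)` has length `A + 10u'`. -/
def taskLen (q : ℕ) (E : Finset (ℕ × ℕ × ℕ)) (t : UTask) : ℤ :=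
  if t.2 then (Aval q E : ℤ) - 10 * elemVal q t.1
  else (Aval q E : ℤ) + 10 * elemVal q t.1

/-- The demand of a task: `t_L(u)` has demand `A + 10u' + 1`, `t_R(u)` has demand `A - 10u'`. -/
def taskDem (q : ℕ) (E : Finset (ℕ × ℕ × ℕ)) (t : UTask) : ℤ :=
  if t.2 then (Aval q E : ℤ) + 10 * elemVal q t.1 + 1
  else (Aval q E : ℤ) - 10 * elemVal q t.1

/-- The schedule of task `t`: the contiguous interval of `taskLen` edges starting at
edge `start t`. -/
noncomputable def sched (q : ℕ) (E : Finset (ℕ × ℕ × ℕ)) (start : UTask → ℤ) (t : UTask) : Finset ℤ :=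
  Finset.Ico (start t) (start t + taskLen q E t)

/-- `(S, start)` is a feasible solution of `σ(K)`: every selected task is a task of the
instance, is scheduled (contiguously, with exactly its length) within the path, and on every
edge `e` the total demand of the selected tasks whose schedule contains `e` is at most the
capacity of `e`. -/
def Feasible (q : ℕ) (E : Finset (ℕ × ℕ × ℕ)) (S : Finset UTask) (start : UTask → ℤ) : Prop :=
  (∀ t ∈ S, validElem q E t.1) ∧
  (∀ t ∈ S, 0 ≤ start t ∧ start t + taskLen q E t ≤ numEdges q E) ∧
  (∀ e : ℤ, 0 ≤ e → e < numEdges q E →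
    ∑ t ∈ S.filter (fun t => e ∈ sched q E start t), taskDem q E t ≤ cap q E e)

/-- The first edge of the `b`-th block (`b ∈ {0, …, q-1}`). -/
def blockStart (q : ℕ) (E : Finset (ℕ × ℕ × ℕ)) (b : ℕ) : ℤ :=
  (b : ℤ) * (2 * (Aval q E : ℤ) + 1)

/-- The `b`-th block of `2A` consecutive edges (`b ∈ {0, …, q-1}`). -/
noncomputable def block (q : ℕ) (E : Finset (ℕ × ℕ × ℕ)) (b : ℕ) : Finset ℤ :=
  Finset.Ico (blockStart q E b) (blockStart q E b + 2 * (Aval q E : ℤ))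

/-- The eight tasks `t_L(x_i), t_R(x_i), t_L(y_j), t_R(y_j), t_L(z_k), t_R(z_k),
t_L(h_ℓ), t_R(h_ℓ)` associated to a hyperedge `h_ℓ = (x_i, y_j, z_k)`. -/
def edgeTasks (h : ℕ × ℕ × ℕ) : Finset UTask :=
  {(Elem.X h.1, true), (Elem.X h.1, false), (Elem.Y h.2.1, true), (Elem.Y h.2.1, false),
   (Elem.Z h.2.2, true), (Elem.Z h.2.2, false), (Elem.H h, true), (Elem.H h, false)}

-- ### auxiliary lemmas

namespace SpanAux

def econst : Elem → ℤ
  | .X _ => 1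
  | .Y _ => 2
  | .Z _ => 4
  | .H _ => -7

lemma rho_ge29 (q : ℕ) : (29 : ℤ) ≤ (rho q : ℤ) := by
  have : 29 ≤ rho q := le_max_left _ _
  exact_mod_cast this

lemma rho_ge_q (q : ℕ) : (q : ℤ) ≤ (rho q : ℤ) := by
  have : q ≤ rho q := le_trans (by omega) (le_max_right 29 (3*q))
  exact_mod_cast this

lemma dvd_sub_econst (q : ℕ) (u : Elem) : (rho q : ℤ) ∣ (elemVal q u - econst u) := by
  cases u with
  | X i => exact ⟨i, by simp [elemVal, xnum, econst]; ring⟩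
  | Y j => exact ⟨(j : ℤ) * (rho q : ℤ), by simp [elemVal, ynum, econst]; ring⟩
  | Z k => exact ⟨(k : ℤ) * (rho q : ℤ)^2, by simp [elemVal, znum, econst]; ring⟩
  | H h => exact ⟨-(h.1 : ℤ) - (h.2.1 : ℤ) * (rho q : ℤ) - (h.2.2 : ℤ) * (rho q : ℤ)^2,
      by simp [elemVal, hnum, econst]; ring⟩

lemma digit3 {ρ d1 d2 d3 : ℤ} (hρ : 0 < ρ) (h1 : |d1| < ρ) (h2 : |d2| < ρ)
    (h : d1 + d2 * ρ + d3 * ρ ^ 2 = 0) : d1 = 0 ∧ d2 = 0 ∧ d3 = 0 := by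
  have hd : ρ ∣ d1 := ⟨-(d2 + d3 * ρ), by linear_combination h⟩
  have h10 : d1 = 0 := Int.eq_zero_of_abs_lt_dvd hd h1
  have h23 : ρ * (d2 + d3 * ρ) = 0 := by linear_combination h - h10
  have h23' : d2 + d3 * ρ = 0 := by
    rcases mul_eq_zero.mp h23 with h' | h'
    · omega
    · exact h'
  have hd2 : ρ ∣ d2 := ⟨-d3, by linear_combination h23'⟩
  have h20 : d2 = 0 := Int.eq_zero_of_abs_lt_dvd hd2 h2
  have : d3 * ρ = 0 := by linear_combination h23' - h20
  rcases mul_eq_zero.mp this with h' | h'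
  · exact ⟨h10, h20, h'⟩
  · omega

lemma econst_cases (u : Elem) : econst u = 1 ∨ econst u = 2 ∨ econst u = 4 ∨ econst u = -7 := by
  cases u <;> simp [econst]

/-- No two valid element values are negatives of each other. -/
lemma no_neg (q : ℕ) (u v : Elem) (h : elemVal q u + elemVal q v = 0) : False := by
  have hd : (rho q : ℤ) ∣ (econst u + econst v) := by
    have := Dvd.dvd.add (dvd_sub_econst q u) (dvd_sub_econst q v)
    have h2 : (rho q : ℤ) ∣ -(econst u + econst v) := by
      have heq : (elemVal q u - econst u) + (elemVal q v - econst v) = -(econst u + econst v) := by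
        linear_combination h
      rwa [heq] at this
    exact (dvd_neg.mp h2)
  have h29 := rho_ge29 q
  have : econst u + econst v = 0 := Int.eq_zero_of_abs_lt_dvd hd (by
    rcases econst_cases u with h'|h'|h'|h' <;> rcases econst_cases v with h''|h''|h''|h'' <;>
      rw [h', h'', abs_lt] <;> constructor <;> omega)
  rcases econst_cases u with h'|h'|h'|h' <;> rcases econst_cases v with h''|h''|h''|h'' <;> omega

/-- elemVal is injective on valid elements. -/
lemma elemVal_inj (q : ℕ) (E : Finset (ℕ × ℕ × ℕ)) (hE : ValidE q E) (u v : Elem)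
    (hu : validElem q E u) (hv : validElem q E v) (h : elemVal q u = elemVal q v) : u = v := by
  have hρ : (0:ℤ) < (rho q : ℤ) := by have := rho_ge29 q; omega
  have hd : (rho q : ℤ) ∣ (econst u - econst v) := by
    have := Dvd.dvd.sub (dvd_sub_econst q u) (dvd_sub_econst q v)
    have heq : (elemVal q u - econst u) - (elemVal q v - econst v) = -(econst u - econst v) := by
      linear_combination h
    rw [heq] at this
    exact dvd_neg.mp this
  have h29 := rho_ge29 q
  have hcc : econst u = econst v := by
    have : econst u - econst v = 0 := Int.eq_zero_of_abs_lt_dvd hd (by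
      rcases econst_cases u with h'|h'|h'|h' <;> rcases econst_cases v with h''|h''|h''|h'' <;>
        rw [h', h'', abs_lt] <;> constructor <;> omega)
    omega
  cases u <;> cases v <;> simp [econst] at hcc
  case X.X i i' =>
    simp only [elemVal, xnum] at h
    have : (i : ℤ) = i' := by
      have h' : (i : ℤ) * (rho q : ℤ) = (i' : ℤ) * (rho q : ℤ) := by linarith
      exact mul_right_cancel₀ (ne_of_gt hρ) h'
    exact congrArg Elem.X (by exact_mod_cast this)
  case Y.Y j j' =>
    simp only [elemVal, ynum] at h
    have hρ2 : (0:ℤ) < (rho q : ℤ)^2 := by positivity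
    have : (j : ℤ) = j' := mul_right_cancel₀ (ne_of_gt hρ2) (by linarith)
    exact congrArg Elem.Y (by exact_mod_cast this)
  case Z.Z k k' =>
    simp only [elemVal, znum] at h
    have hρ3 : (0:ℤ) < (rho q : ℤ)^3 := by positivity
    have : (k : ℤ) = k' := mul_right_cancel₀ (ne_of_gt hρ3) (by linarith)
    exact congrArg Elem.Z (by exact_mod_cast this)
  case H.H p p' =>
    simp only [elemVal, hnum] at h
    obtain ⟨hi, hj, hk⟩ := hE p hu
    obtain ⟨hi', hj', hk'⟩ := hE p' hv
    simp only [Finset.mem_Icc] at hi hj hk hi' hj' hk'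
    have hq := rho_ge_q q
    have hinner : ((p.1 : ℤ) - p'.1) + ((p.2.1 : ℤ) - p'.2.1) * (rho q : ℤ)
        + ((p.2.2 : ℤ) - p'.2.2) * (rho q : ℤ)^2 = 0 := by
      have hmul : (rho q : ℤ) * (((p.1 : ℤ) - p'.1) + ((p.2.1 : ℤ) - p'.2.1) * (rho q : ℤ)
        + ((p.2.2 : ℤ) - p'.2.2) * (rho q : ℤ)^2) = 0 := by linear_combination -h
      rcases mul_eq_zero.mp hmul with h' | h'
      · omega
      · exact h'
    obtain ⟨e1, e2, e3⟩ := digit3 hρ (by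
        have : (p.1 : ℤ) ≤ q := by exact_mod_cast hi.2
        have : (p'.1 : ℤ) ≤ q := by exact_mod_cast hi'.2
        have : (1 : ℤ) ≤ (p.1 : ℤ) := by exact_mod_cast hi.1
        have : (1 : ℤ) ≤ (p'.1 : ℤ) := by exact_mod_cast hi'.1
        rw [abs_lt]; omega)
      (by
        have : (p.2.1 : ℤ) ≤ q := by exact_mod_cast hj.2
        have : (p'.2.1 : ℤ) ≤ q := by exact_mod_cast hj'.2
        have : (1 : ℤ) ≤ (p.2.1 : ℤ) := by exact_mod_cast hj.1
        have : (1 : ℤ) ≤ (p'.2.1 : ℤ) := by exact_mod_cast hj'.1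
        rw [abs_lt]; omega) hinner
    have e1' : p.1 = p'.1 := by exact_mod_cast sub_eq_zero.mp e1
    have e2' : p.2.1 = p'.2.1 := by exact_mod_cast sub_eq_zero.mp e2
    have e3' : p.2.2 = p'.2.2 := by exact_mod_cast sub_eq_zero.mp e3
    have : p = p' := by
      ext
      · exact e1'
      · exact e2'
      · exact e3'
    exact congrArg Elem.H this


lemma abs_elemVal_le (q : ℕ) (E : Finset (ℕ × ℕ × ℕ)) (u : Elem) (hu : validElem q E u) :
    10 * |elemVal q u| ≤ (mu q E : ℤ) - 1 := by
  have hmem : elemVal q u ∈ QK q E := by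
    rw [QK]
    simp only [Finset.mem_union, Finset.mem_image]
    cases u with
    | X i => exact Or.inl (Or.inl (Or.inl ⟨i, hu, rfl⟩))
    | Y j => exact Or.inl (Or.inl (Or.inr ⟨j, hu, rfl⟩))
    | Z k => exact Or.inl (Or.inr ⟨k, hu, rfl⟩)
    | H h => exact Or.inr ⟨h, hu, rfl⟩
  have hle : 10 * (elemVal q u).natAbs ≤ (QK q E).sup (fun u => 10 * u.natAbs) :=
    Finset.le_sup (f := fun u => 10 * u.natAbs) hmem
  have hmu : mu q E = 1 + (QK q E).sup (fun u => 10 * u.natAbs) := rfl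
  have habs : |elemVal q u| = ((elemVal q u).natAbs : ℤ) := Int.abs_eq_natAbs _
  rw [habs, hmu]
  push_cast
  omega

set_option maxHeartbeats 1000000 in
lemma sum_four (q : ℕ) (E : Finset (ℕ × ℕ × ℕ)) (hE : ValidE q E) (U : Finset Elem)
    (hcard : U.card = 4) (hval : ∀ u ∈ U, validElem q E u)
    (hsum : ∑ u ∈ U, elemVal q u = 0) :
    ∃ h ∈ E, U = {Elem.X h.1, Elem.Y h.2.1, Elem.Z h.2.2, Elem.H h} := by
  classical
  have h29 := rho_ge29 q
  have hρ : (0:ℤ) < (rho q : ℤ) := by omega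
  have hdvd : (rho q : ℤ) ∣ ∑ u ∈ U, econst u := by
    have h1 : (rho q : ℤ) ∣ ∑ u ∈ U, (elemVal q u - econst u) :=
      Finset.dvd_sum (fun u _ => dvd_sub_econst q u)
    rw [Finset.sum_sub_distrib, hsum, zero_sub] at h1
    exact dvd_neg.mp h1
  have habs : |∑ u ∈ U, econst u| ≤ 28 := by
    calc |∑ u ∈ U, econst u| ≤ ∑ u ∈ U, |econst u| := Finset.abs_sum_le_sum_abs _ _
    _ ≤ ∑ _u ∈ U, 7 := Finset.sum_le_sum (fun u _ => by
        rcases econst_cases u with h|h|h|h <;> rw [h] <;> norm_num)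
    _ = 28 := by rw [Finset.sum_const, hcard]; norm_num
  have hc0 : ∑ u ∈ U, econst u = 0 := Int.eq_zero_of_abs_lt_dvd hdvd (by omega)
  -- partition U according to the value of econst
  set P : ℤ → Finset Elem := fun c => U.filter (fun u => econst u = c) with hP
  have hdisj : ∀ c c' : ℤ, c ≠ c' → Disjoint (P c) (P c') := by
    intro c c' hcc
    rw [Finset.disjoint_left]
    intro a ha ha'
    rw [hP] at ha ha'
    simp only [Finset.mem_filter] at ha ha'
    exact hcc (ha.2 ▸ ha'.2 ▸ rfl)
  have hUeq : U = P 1 ∪ (P 2 ∪ (P 4 ∪ P (-7))) := by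
    ext u
    simp only [hP, Finset.mem_union, Finset.mem_filter]
    constructor
    · intro hu
      rcases econst_cases u with h|h|h|h
      · exact Or.inl ⟨hu, h⟩
      · exact Or.inr (Or.inl ⟨hu, h⟩)
      · exact Or.inr (Or.inr (Or.inl ⟨hu, h⟩))
      · exact Or.inr (Or.inr (Or.inr ⟨hu, h⟩))
    · rintro (⟨h,_⟩|⟨h,_⟩|⟨h,_⟩|⟨h,_⟩) <;> exact h
  have hd1 : Disjoint (P 4) (P (-7)) := hdisj _ _ (by norm_num)
  have hd2 : Disjoint (P 2) (P 4 ∪ P (-7)) :=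
    Finset.disjoint_union_right.mpr ⟨hdisj _ _ (by norm_num), hdisj _ _ (by norm_num)⟩
  have hd3 : Disjoint (P 1) (P 2 ∪ (P 4 ∪ P (-7))) := by
    refine Finset.disjoint_union_right.mpr ⟨hdisj _ _ (by norm_num),
      Finset.disjoint_union_right.mpr ⟨hdisj _ _ (by norm_num), hdisj _ _ (by norm_num)⟩⟩
  have hcards : (P 1).card + ((P 2).card + ((P 4).card + (P (-7)).card)) = 4 := by
    rw [← Finset.card_union_of_disjoint hd1, ← Finset.card_union_of_disjoint hd2,
      ← Finset.card_union_of_disjoint hd3, ← hUeq, hcard]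
  have hsumP : ∀ c : ℤ, ∑ u ∈ P c, econst u = (P c).card * c := by
    intro c
    have hcc : ∀ u ∈ P c, econst u = c := fun u hu => (Finset.mem_filter.mp hu).2
    calc ∑ u ∈ P c, econst u = ∑ _u ∈ P c, c := Finset.sum_congr rfl hcc
    _ = (P c).card * c := by rw [Finset.sum_const, nsmul_eq_mul]
  have hsums : ((P 1).card : ℤ) * 1 + ((P 2).card : ℤ) * 2 + ((P 4).card : ℤ) * 4
      + ((P (-7)).card : ℤ) * (-7) = 0 := by
    have := hc0
    rw [hUeq, Finset.sum_union hd3, Finset.sum_union hd2, Finset.sum_union hd1,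
      hsumP 1, hsumP 2, hsumP 4, hsumP (-7)] at this
    linarith
  have hgen : ∀ n1 n2 n4 n7 : ℕ, n1 + (n2 + (n4 + n7)) = 4 →
      (n1 : ℤ) * 1 + (n2 : ℤ) * 2 + (n4 : ℤ) * 4 + (n7 : ℤ) * (-7) = 0 →
      n1 = 1 ∧ n2 = 1 ∧ n4 = 1 ∧ n7 = 1 := by
    intro n1 n2 n4 n7 h1 h2
    have h7 : n7 ≤ 4 := by omega
    interval_cases n7 <;> refine ⟨?_, ?_, ?_, ?_⟩ <;> omega
  have hc1 := hgen _ _ _ _ hcards hsums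
  obtain ⟨a, ha⟩ := Finset.card_eq_one.mp hc1.1
  obtain ⟨bb, hbb⟩ := Finset.card_eq_one.mp hc1.2.1
  obtain ⟨c, hc⟩ := Finset.card_eq_one.mp hc1.2.2.1
  obtain ⟨d, hd⟩ := Finset.card_eq_one.mp hc1.2.2.2
  have haU : a ∈ U ∧ econst a = 1 := by
    have : a ∈ P 1 := ha ▸ Finset.mem_singleton_self a
    simpa [hP, Finset.mem_filter] using this
  have hbU : bb ∈ U ∧ econst bb = 2 := by
    have : bb ∈ P 2 := hbb ▸ Finset.mem_singleton_self bb
    simpa [hP, Finset.mem_filter] using this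
  have hcU : c ∈ U ∧ econst c = 4 := by
    have : c ∈ P 4 := hc ▸ Finset.mem_singleton_self c
    simpa [hP, Finset.mem_filter] using this
  have hdU : d ∈ U ∧ econst d = -7 := by
    have : d ∈ P (-7) := hd ▸ Finset.mem_singleton_self d
    simpa [hP, Finset.mem_filter] using this
  obtain ⟨i, rfl⟩ : ∃ i, a = Elem.X i := by
    rcases a with i|j|k|p
    · exact ⟨i, rfl⟩
    all_goals simp [econst] at haU
  obtain ⟨j, rfl⟩ : ∃ j, bb = Elem.Y j := by
    rcases bb with i|j|k|p
    · simp [econst] at hbU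
    · exact ⟨j, rfl⟩
    all_goals simp [econst] at hbU
  obtain ⟨k, rfl⟩ : ∃ k, c = Elem.Z k := by
    rcases c with i|j|k|p
    · simp [econst] at hcU
    · simp [econst] at hcU
    · exact ⟨k, rfl⟩
    · simp [econst] at hcU
  obtain ⟨p, rfl⟩ : ∃ p, d = Elem.H p := by
    rcases d with i|j|k|p
    · simp [econst] at hdU
    · simp [econst] at hdU
    · simp [econst] at hdU
    · exact ⟨p, rfl⟩
  -- U is exactly these four elements
  have hsub : ({Elem.X i, Elem.Y j, Elem.Z k, Elem.H p} : Finset Elem) ⊆ U := by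
    intro u hu
    simp only [Finset.mem_insert, Finset.mem_singleton] at hu
    rcases hu with rfl|rfl|rfl|rfl
    · exact haU.1
    · exact hbU.1
    · exact hcU.1
    · exact hdU.1
  have hcard4 : ({Elem.X i, Elem.Y j, Elem.Z k, Elem.H p} : Finset Elem).card = 4 := by
    rw [Finset.card_insert_of_notMem (by simp), Finset.card_insert_of_notMem (by simp),
      Finset.card_insert_of_notMem (by simp), Finset.card_singleton]
  have hUfin : U = ({Elem.X i, Elem.Y j, Elem.Z k, Elem.H p} : Finset Elem) :=
    (Finset.eq_of_subset_of_card_le hsub (by rw [hcard, hcard4])).symm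
  -- the value equation
  have hval4 : elemVal q (Elem.X i) + (elemVal q (Elem.Y j) + (elemVal q (Elem.Z k)
      + elemVal q (Elem.H p))) = 0 := by
    have := hsum
    rw [hUfin, Finset.sum_insert (by simp), Finset.sum_insert (by simp),
      Finset.sum_insert (by simp), Finset.sum_singleton] at this
    exact this
  simp only [elemVal, xnum, ynum, znum, hnum] at hval4
  have hpE : p ∈ E := hval _ hdU.1
  have hp := hE p hpE
  have hiv : i ∈ Finset.Icc 1 q := hval _ haU.1
  have hjv : j ∈ Finset.Icc 1 q := hval _ hbU.1
  have hkv : k ∈ Finset.Icc 1 q := hval _ hcU.1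
  simp only [Finset.mem_Icc] at hiv hjv hkv
  obtain ⟨hp1, hp2, hp3⟩ := hp
  simp only [Finset.mem_Icc] at hp1 hp2 hp3
  have hq := rho_ge_q q
  have hinner : ((i : ℤ) - p.1) + ((j : ℤ) - p.2.1) * (rho q : ℤ)
      + ((k : ℤ) - p.2.2) * (rho q : ℤ)^2 = 0 := by
    have hmul : (rho q : ℤ) * (((i : ℤ) - p.1) + ((j : ℤ) - p.2.1) * (rho q : ℤ)
        + ((k : ℤ) - p.2.2) * (rho q : ℤ)^2) = 0 := by linear_combination hval4
    rcases mul_eq_zero.mp hmul with h' | h'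
    · omega
    · exact h'
  obtain ⟨e1, e2, e3⟩ := digit3 hρ
    (by rw [abs_lt]; constructor <;> [nlinarith [hiv.1, hp1.2]; nlinarith [hiv.2, hp1.1]])
    (by rw [abs_lt]; constructor <;> [nlinarith; nlinarith]) hinner
  have e1' : i = p.1 := by exact_mod_cast sub_eq_zero.mp e1
  have e2' : j = p.2.1 := by exact_mod_cast sub_eq_zero.mp e2
  have e3' : k = p.2.2 := by exact_mod_cast sub_eq_zero.mp e3
  exact ⟨p, hpE, by rw [hUfin, e1', e2', e3']⟩

end SpanAux

namespace SpanAux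

variable {q : ℕ} {E : Finset (ℕ × ℕ × ℕ)}

lemma mu_ge_one (q : ℕ) (E : Finset (ℕ × ℕ × ℕ)) : (1 : ℤ) ≤ (mu q E : ℤ) := by
  have : 1 ≤ mu q E := Nat.le_add_right 1 _
  exact_mod_cast this

lemma Aval_eq (q : ℕ) (E : Finset (ℕ × ℕ × ℕ)) :
    (Aval q E : ℤ) = 5 * (mu q E : ℤ) + 4 := by
  rw [Aval]; push_cast; ring

/-- bounds for the length of a valid task -/
lemma len_bounds (t : UTask) (ht : validElem q E t.1) :
    (Aval q E : ℤ) - (mu q E : ℤ) + 1 ≤ taskLen q E t ∧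
      taskLen q E t ≤ (Aval q E : ℤ) + (mu q E : ℤ) - 1 := by
  have h0 := abs_elemVal_le q E t.1 ht
  have habs : |10 * elemVal q t.1| = 10 * |elemVal q t.1| := by
    rw [abs_mul]; norm_num
  have h := abs_le.mp (habs ▸ h0 : |10 * elemVal q t.1| ≤ (mu q E : ℤ) - 1)
  rw [taskLen]
  constructor <;> (split <;> push_cast <;> omega)

/-- bounds for the demand of a valid task -/
lemma dem_bounds (t : UTask) (ht : validElem q E t.1) :
    (Aval q E : ℤ) - (mu q E : ℤ) + 1 ≤ taskDem q E t ∧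
      taskDem q E t ≤ (Aval q E : ℤ) + (mu q E : ℤ) := by
  have h0 := abs_elemVal_le q E t.1 ht
  have habs : |10 * elemVal q t.1| = 10 * |elemVal q t.1| := by
    rw [abs_mul]; norm_num
  have h := abs_le.mp (habs ▸ h0 : |10 * elemVal q t.1| ≤ (mu q E : ℤ) - 1)
  rw [taskDem]
  constructor <;> (split <;> push_cast <;> omega)

lemma dem_add_len (t : UTask) :
    taskDem q E t + taskLen q E t = 2 * (Aval q E : ℤ) + (if t.2 then 1 else 0) := by
  rw [taskDem, taskLen]; split <;> ring

lemma cap_le (e : ℤ) : cap q E e ≤ 4 * (Aval q E : ℤ) + 4 := by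
  rw [cap]
  have : (0:ℤ) ≤ (Aval q E : ℤ) := by positivity
  split
  · exact le_refl _
  · split <;> omega

end SpanAux
/-- If in a feasible solution of `σ(K)` exactly 8 tasks have their schedule contained in a
single block `I`, then these 8 tasks are exactly `t_L(x_i), t_R(x_i), t_L(y_j), t_R(y_j),
t_L(z_k), t_R(z_k), t_L(h_ℓ), t_R(h_ℓ)` for some hyperedge `h_ℓ = (x_i, y_j, z_k) ∈ E`. -/
theorem eight_per_block_is_hyperedge (q : ℕ) (E : Finset (ℕ × ℕ × ℕ)) (hE : ValidE q E)
    (S : Finset UTask) (start : UTask → ℤ) (hfeas : Feasible q E S start)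
    (b : ℕ) (hb : b < q)
    (h8 : (S.filter (fun t => sched q E start t ⊆ block q E b)).card = 8) :
    ∃ h ∈ E, S.filter (fun t => sched q E start t ⊆ block q E b) = edgeTasks h := by
  classical
  obtain ⟨hvalid, hsched, hcap⟩ := hfeas
  have hAdef : (Aval q E : ℤ) = 5 * (mu q E : ℤ) + 4 := SpanAux.Aval_eq q E
  have hμ1 : (1:ℤ) ≤ (mu q E : ℤ) := SpanAux.mu_ge_one q E
  set A : ℤ := (Aval q E : ℤ) with hA
  set μ : ℤ := (mu q E : ℤ) with hμ
  set bs : ℤ := blockStart q E b with hbs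
  set T : Finset UTask := S.filter (fun t => sched q E start t ⊆ block q E b) with hT
  have hTsub : T ⊆ S := Finset.filter_subset _ _
  have hTcard : T.card = 8 := h8
  have hblockm : ∀ e : ℤ, e ∈ block q E b ↔ bs ≤ e ∧ e < bs + 2 * A := by
    intro e; rw [block, Finset.mem_Ico]
  have hbsval : bs = (b:ℤ) * (2*A+1) := by rw [hbs, blockStart]
  have hbnn : (0:ℤ) ≤ (b:ℤ) := Int.ofNat_nonneg b
  have hbs0 : 0 ≤ bs := by rw [hbsval]; positivity
  -- block edges are honest path edges
  have hedge_range : ∀ e : ℤ, e ∈ block q E b → 0 ≤ e ∧ e < numEdges q E := by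
    intro e he
    rw [hblockm] at he
    have hbq : (b:ℤ) + 1 ≤ (q:ℤ) := by exact_mod_cast hb
    have hnum : numEdges q E = (2*A+1) * (q:ℤ) - 1 := by rw [numEdges, hA]
    have : bs + 2*A ≤ numEdges q E := by
      rw [hnum, hbsval]; nlinarith
    constructor
    · omega
    · omega
  -- capacity of block edges
  have hcapblock : ∀ r : ℤ, 0 ≤ r → r < 2*A →
      cap q E (bs + r) = if r < A then 4*A+4 else 4*A := by
    intro r h0 h2
    have hmod : (bs + r) % (2*A+1) = r := by
      rw [hbsval]
      have heq : (b:ℤ) * (2*A+1) + r = r + (2*A+1) * (b:ℤ) := by ring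
      rw [heq, Int.add_mul_emod_self_left, Int.emod_eq_of_lt h0 (by omega)]
    have hcapeq : cap q E (bs + r)
        = if (bs+r) % (2*A+1) < A then 4*A+4 else if (bs+r) % (2*A+1) < 2*A then 4*A else 0 := rfl
    rw [hcapeq, hmod]
    by_cases hr : r < A
    · rw [if_pos hr, if_pos hr]
    · rw [if_neg hr, if_neg hr, if_pos h2]
  -- per-task bounds
  have hlenb : ∀ t ∈ T, A - μ + 1 ≤ taskLen q E t ∧ taskLen q E t ≤ A + μ - 1 :=
    fun t ht => SpanAux.len_bounds t (hvalid t (hTsub ht))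
  have hdemb : ∀ t ∈ S, A - μ + 1 ≤ taskDem q E t ∧ taskDem q E t ≤ A + μ :=
    fun t ht => SpanAux.dem_bounds t (hvalid t ht)
  have hstart : ∀ t ∈ T, bs ≤ start t ∧ start t + taskLen q E t ≤ bs + 2*A := by
    intro t ht
    have hsub2 : sched q E start t ⊆ block q E b := by
      have := (Finset.mem_filter.mp (hT ▸ ht)).2
      exact this
    have hlen := hlenb t ht
    have hne : start t ∈ sched q E start t := by
      rw [sched, Finset.mem_Ico]; omega
    have hlast : start t + taskLen q E t - 1 ∈ sched q E start t := by
      rw [sched, Finset.mem_Ico]; omega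
    have h1 := (hblockm _).mp (hsub2 hne)
    have h2 := (hblockm _).mp (hsub2 hlast)
    omega
  -- at most 4 selected tasks on each edge
  have hcard_edge : ∀ e ∈ block q E b, (S.filter (fun t => e ∈ sched q E start t)).card ≤ 4 := by
    intro e he
    by_contra hcon
    push_neg at hcon
    have h5 : 5 ≤ (S.filter (fun t => e ∈ sched q E start t)).card := hcon
    have hsum := hcap e (hedge_range e he).1 (hedge_range e he).2
    have hlow := Finset.card_nsmul_le_sum (S.filter (fun t => e ∈ sched q E start t))
      (taskDem q E) (A - μ + 1)
      (fun t ht => (hdemb t (Finset.mem_filter.mp ht).1).1)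
    rw [nsmul_eq_mul] at hlow
    have hcaple : cap q E e ≤ 4*A + 4 := SpanAux.cap_le e
    have hge : (5:ℤ) ≤ ((S.filter (fun t => e ∈ sched q E start t)).card : ℤ) := by
      exact_mod_cast h5
    have hpos : (0:ℤ) ≤ A - μ + 1 := by omega
    nlinarith
  -- coverage identity
  have hcovsum : ∑ e ∈ block q E b, ((T.filter (fun t => e ∈ sched q E start t)).card : ℤ)
      = ∑ t ∈ T, taskLen q E t := by
    have hstep1 : ∀ e : ℤ, ((T.filter (fun t => e ∈ sched q E start t)).card : ℤ)
        = ∑ t ∈ T, if e ∈ sched q E start t then (1:ℤ) else 0 := by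
      intro e; rw [Finset.sum_boole]
    rw [Finset.sum_congr rfl (fun e _ => hstep1 e), Finset.sum_comm]
    apply Finset.sum_congr rfl
    intro t ht
    have hsub2 : sched q E start t ⊆ block q E b := by
      have := (Finset.mem_filter.mp (hT ▸ ht)).2
      exact this
    have hfeq : (block q E b).filter (fun e => e ∈ sched q E start t) = sched q E start t := by
      apply Finset.Subset.antisymm
      · intro e hee; exact (Finset.mem_filter.mp hee).2
      · intro e hee; exact Finset.mem_filter.mpr ⟨hsub2 hee, hee⟩
    have : (∑ e ∈ block q E b, if e ∈ sched q E start t then (1:ℤ) else 0)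
        = (((block q E b).filter (fun e => e ∈ sched q E start t)).card : ℤ) := by
      rw [Finset.sum_boole]
    rw [this, hfeq, sched, Int.card_Ico]
    have := hlenb t ht
    omega
  have hcovle : ∀ e ∈ block q E b, (T.filter (fun t => e ∈ sched q E start t)).card ≤ 4 := by
    intro e he
    exact le_trans (Finset.card_le_card (Finset.filter_subset_filter _ hTsub)) (hcard_edge e he)
  have hblockcard : (((block q E b).card) : ℤ) = 2*A := by
    rw [block, Int.card_Ico]
    have h0 : (0:ℤ) ≤ 2 * (Aval q E : ℤ) := by positivity
    omega
  have hSL_le : ∑ t ∈ T, taskLen q E t ≤ 8*A := by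
    rw [← hcovsum]
    calc ∑ e ∈ block q E b, ((T.filter (fun t => e ∈ sched q E start t)).card : ℤ)
        ≤ ∑ _e ∈ block q E b, (4:ℤ) :=
          Finset.sum_le_sum (fun e he => by exact_mod_cast hcovle e he)
      _ = ((block q E b).card : ℤ) * 4 := by rw [Finset.sum_const, nsmul_eq_mul]
      _ = 8*A := by rw [hblockcard]; ring
  -- the two reference edges
  have hμA : μ ≤ A := by omega
  set Xs : Finset UTask := T.filter (fun t => bs + (A - μ) ∈ sched q E start t) with hXs
  set Ys : Finset UTask := T.filter (fun t => bs + (A + μ - 1) ∈ sched q E start t) with hYs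
  have hαblock : bs + (A - μ) ∈ block q E b := by rw [hblockm]; omega
  have hβblock : bs + (A + μ - 1) ∈ block q E b := by rw [hblockm]; omega
  have hXcard_le : Xs.card ≤ 4 :=
    le_trans (Finset.card_le_card (Finset.filter_subset_filter _ hTsub)) (hcard_edge _ hαblock)
  have hYcard_le : Ys.card ≤ 4 :=
    le_trans (Finset.card_le_card (Finset.filter_subset_filter _ hTsub)) (hcard_edge _ hβblock)
  have hXYunion : Xs ∪ Ys = T := by
    apply Finset.Subset.antisymm
    · exact Finset.union_subset (Finset.filter_subset _ _) (Finset.filter_subset _ _)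
    · intro t ht
      have hs := hstart t ht
      have hl := hlenb t ht
      by_cases hcase : start t ≤ bs + (A - μ)
      · apply Finset.mem_union_left
        exact Finset.mem_filter.mpr ⟨ht, by rw [sched, Finset.mem_Ico]; omega⟩
      · apply Finset.mem_union_right
        exact Finset.mem_filter.mpr ⟨ht, by rw [sched, Finset.mem_Ico]; omega⟩
  have hcards : Xs.card = 4 ∧ Ys.card = 4 ∧ Disjoint Xs Ys := by
    have hint := Finset.card_union_add_card_inter Xs Ys
    rw [hXYunion, hTcard] at hint
    have hinter0 : (Xs ∩ Ys).card = 0 := by omega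
    refine ⟨by omega, by omega, ?_⟩
    rw [Finset.disjoint_iff_inter_eq_empty]
    exact Finset.card_eq_zero.mp hinter0
  obtain ⟨hXcard, hYcard, hdisj⟩ := hcards
  -- demand bound for a group of tasks all covering one block edge
  have hsum_edge : ∀ e ∈ block q E b, ∀ W : Finset UTask, W ⊆ T →
      (∀ t ∈ W, e ∈ sched q E start t) → ∑ t ∈ W, taskDem q E t ≤ cap q E e := by
    intro e he W hW hWcov
    have hsub3 : W ⊆ S.filter (fun t => e ∈ sched q E start t) :=
      fun t ht => Finset.mem_filter.mpr ⟨hTsub (hW ht), hWcov t ht⟩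
    refine le_trans (Finset.sum_le_sum_of_subset_of_nonneg hsub3 ?_)
      (hcap e (hedge_range e he).1 (hedge_range e he).2)
    intro t ht _
    have := hdemb t (Finset.mem_filter.mp ht).1
    omega
  have hXd : ∑ t ∈ Xs, taskDem q E t ≤ 4*A+4 := by
    have h1 := hsum_edge _ hαblock Xs (Finset.filter_subset _ _)
      (fun t ht => (Finset.mem_filter.mp ht).2)
    have h2 := hcapblock (A - μ) (by omega) (by omega)
    rw [if_pos (by omega)] at h2
    omega
  have hYd : ∑ t ∈ Ys, taskDem q E t ≤ 4*A := by
    have h1 := hsum_edge _ hβblock Ys (Finset.filter_subset _ _)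
      (fun t ht => (Finset.mem_filter.mp ht).2)
    have h2 := hcapblock (A + μ - 1) (by omega) (by omega)
    rw [if_neg (by omega)] at h2
    omega
  -- arithmetic decompositions
  have hdem_split : ∀ W : Finset UTask, ∑ t ∈ W, taskDem q E t
      = (W.card : ℤ) * A + 10 * (∑ t ∈ W, if t.2 then elemVal q t.1 else -elemVal q t.1)
        + ((W.filter (fun t => t.2 = true)).card : ℤ) := by
    intro W
    have h1 : ∀ t : UTask, taskDem q E t
        = A + (10 * (if t.2 then elemVal q t.1 else -elemVal q t.1)
          + (if t.2 = true then (1:ℤ) else 0)) := by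
      intro t; rw [taskDem]; rcases t with ⟨u, bo⟩; cases bo <;> simp <;> ring
    rw [Finset.sum_congr rfl (fun t _ => h1 t), Finset.sum_add_distrib, Finset.sum_const,
      Finset.sum_add_distrib, ← Finset.mul_sum, Finset.sum_boole, nsmul_eq_mul]
    ring
  have hlen_split : ∀ W : Finset UTask, ∑ t ∈ W, taskLen q E t
      = (W.card : ℤ) * A - 10 * (∑ t ∈ W, if t.2 then elemVal q t.1 else -elemVal q t.1) := by
    intro W
    have h1 : ∀ t : UTask, taskLen q E t
        = A - 10 * (if t.2 then elemVal q t.1 else -elemVal q t.1) := by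
      intro t; rw [taskLen]; rcases t with ⟨u, bo⟩; cases bo <;> simp <;> ring
    rw [Finset.sum_congr rfl (fun t _ => h1 t), Finset.sum_sub_distrib, Finset.sum_const,
      ← Finset.mul_sum, nsmul_eq_mul]
  -- the balance argument
  have hTsumlen : ∑ t ∈ T, taskLen q E t
      = ∑ t ∈ Xs, taskLen q E t + ∑ t ∈ Ys, taskLen q E t := by
    rw [← hXYunion, Finset.sum_union hdisj]
  have hXdd := hdem_split Xs
  have hYdd := hdem_split Ys
  have hXl := hlen_split Xs
  have hYl := hlen_split Ys
  rw [hXcard] at hXdd hXl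
  rw [hYcard] at hYdd hYl
  have hWX0 : (∑ t ∈ Xs, if t.2 then elemVal q t.1 else -elemVal q t.1) = 0 ∧
      (∑ t ∈ Ys, if t.2 then elemVal q t.1 else -elemVal q t.1) = 0 ∧
      ((Ys.filter (fun t => t.2 = true)).card = 0) := by
    have hx := hXd
    have hy := hYd
    rw [hXdd] at hx
    rw [hYdd] at hy
    have hlen8 : ∑ t ∈ Xs, taskLen q E t + ∑ t ∈ Ys, taskLen q E t ≤ 8*A := by
      rw [← hTsumlen]; exact hSL_le
    rw [hXl, hYl] at hlen8
    omega
  obtain ⟨hWX, hWY, hNY⟩ := hWX0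
  have hSL_eq : ∑ t ∈ T, taskLen q E t = 8*A := by
    rw [hTsumlen, hXl, hYl, hWX, hWY]; ring
  have hYsR : ∀ t ∈ Ys, t.2 = false := by
    intro t ht
    by_contra hh
    have htt : t.2 = true := by revert hh; cases t.2 <;> simp
    have : t ∈ Ys.filter (fun t => t.2 = true) := Finset.mem_filter.mpr ⟨ht, htt⟩
    have := Finset.card_pos.mpr ⟨t, this⟩
    omega
  have hYsum : ∑ t ∈ Ys, elemVal q t.1 = 0 := by
    have : (∑ t ∈ Ys, if t.2 then elemVal q t.1 else -elemVal q t.1)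
        = ∑ t ∈ Ys, -elemVal q t.1 := by
      apply Finset.sum_congr rfl
      intro t ht; rw [if_neg (by rw [hYsR t ht]; simp)]
    rw [this, Finset.sum_neg_distrib] at hWY
    omega
  -- coverage is exactly 4 everywhere in the block
  have hcov4 : ∀ e ∈ block q E b, (T.filter (fun t => e ∈ sched q E start t)).card = 4 := by
    intro e he
    by_contra hcon
    have hlt : ((T.filter (fun t => e ∈ sched q E start t)).card : ℤ) < 4 := by
      have := hcovle e he; omega
    have hstrict : ∑ e' ∈ block q E b, ((T.filter (fun t => e' ∈ sched q E start t)).card : ℤ)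
        < ∑ _e' ∈ block q E b, (4:ℤ) := by
      apply Finset.sum_lt_sum
      · intro i hi; exact_mod_cast hcovle i hi
      · exact ⟨e, he, hlt⟩
    rw [hcovsum, hSL_eq, Finset.sum_const, nsmul_eq_mul] at hstrict
    rw [hblockcard] at hstrict
    omega
  -- all Xs tasks start at bs, all Ys tasks end at bs + 2A
  have hXstart : ∀ t ∈ Xs, start t = bs := by
    have hX0sub : T.filter (fun t => bs ∈ sched q E start t) ⊆ Xs := by
      intro t ht
      obtain ⟨ht1, ht2⟩ := Finset.mem_filter.mp ht
      have hs := hstart t ht1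
      have hl := hlenb t ht1
      rw [sched, Finset.mem_Ico] at ht2
      refine Finset.mem_filter.mpr ⟨ht1, ?_⟩
      rw [sched, Finset.mem_Ico]; omega
    have hbsin : bs ∈ block q E b := by rw [hblockm]; omega
    have hX0card := hcov4 bs hbsin
    have hXeq : T.filter (fun t => bs ∈ sched q E start t) = Xs :=
      Finset.eq_of_subset_of_card_le hX0sub (by omega)
    intro t ht
    rw [← hXeq] at ht
    obtain ⟨ht1, ht2⟩ := Finset.mem_filter.mp ht
    rw [sched, Finset.mem_Ico] at ht2
    have hs := hstart t ht1
    omega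
  have hYend : ∀ t ∈ Ys, start t + taskLen q E t = bs + 2*A := by
    have hY0sub : T.filter (fun t => bs + (2*A-1) ∈ sched q E start t) ⊆ Ys := by
      intro t ht
      obtain ⟨ht1, ht2⟩ := Finset.mem_filter.mp ht
      have hs := hstart t ht1
      have hl := hlenb t ht1
      rw [sched, Finset.mem_Ico] at ht2
      refine Finset.mem_filter.mpr ⟨ht1, ?_⟩
      rw [sched, Finset.mem_Ico]; omega
    have hlastin : bs + (2*A-1) ∈ block q E b := by rw [hblockm]; omega
    have hY0card := hcov4 _ hlastin
    have hYeq : T.filter (fun t => bs + (2*A-1) ∈ sched q E start t) = Ys :=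
      Finset.eq_of_subset_of_card_le hY0sub (by omega)
    intro t ht
    rw [← hYeq] at ht
    obtain ⟨ht1, ht2⟩ := Finset.mem_filter.mp ht
    rw [sched, Finset.mem_Ico] at ht2
    have hs := hstart t ht1
    omega
  -- the matching count lemma
  have hcount : ∀ ℓ : ℤ, 1 ≤ ℓ → ℓ ≤ 2*A - 1 →
      (Xs.filter (fun t => taskLen q E t = ℓ)).card
        = (Ys.filter (fun t => taskLen q E t = 2*A - ℓ)).card := by
    intro ℓ hl1 hl2
    have hdecomp : ∀ e ∈ block q E b,
        (Xs.filter (fun t => e ∈ sched q E start t)).card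
          + (Ys.filter (fun t => e ∈ sched q E start t)).card = 4 := by
      intro e he
      have h4 := hcov4 e he
      rw [← hXYunion, Finset.filter_union,
        Finset.card_union_of_disjoint (Finset.disjoint_filter_filter hdisj)] at h4
      exact h4
    have hXe : ∀ x : ℤ, 0 ≤ x →
        Xs.filter (fun t => bs + x ∈ sched q E start t)
          = Xs.filter (fun t => x < taskLen q E t) := by
      intro x hx
      apply Finset.filter_congr
      intro t ht
      have hst := hXstart t ht
      rw [sched, Finset.mem_Ico]
      constructor
      · intro hh; omega
      · intro hh; omega
    have hYe : ∀ x : ℤ, x < 2*A →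
        Ys.filter (fun t => bs + x ∈ sched q E start t)
          = Ys.filter (fun t => 2*A - x ≤ taskLen q E t) := by
      intro x hx
      apply Finset.filter_congr
      intro t ht
      have hen := hYend t ht
      rw [sched, Finset.mem_Ico]
      constructor
      · intro hh; omega
      · intro hh; omega
    have h1eq := hdecomp (bs + (ℓ-1)) (by rw [hblockm]; omega)
    have h2eq := hdecomp (bs + ℓ) (by rw [hblockm]; omega)
    rw [hXe (ℓ-1) (by omega), hYe (ℓ-1) (by omega)] at h1eq
    rw [hXe ℓ (by omega), hYe ℓ (by omega)] at h2eq
    -- split the X-filter at ℓ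
    have hsplitX : (Xs.filter (fun t => ℓ - 1 < taskLen q E t)).card
        = (Xs.filter (fun t => ℓ < taskLen q E t)).card
          + (Xs.filter (fun t => taskLen q E t = ℓ)).card := by
      rw [← Finset.card_union_of_disjoint (by
        rw [Finset.disjoint_left]
        intro a ha hb
        have h1 := (Finset.mem_filter.mp ha).2
        have h2 := (Finset.mem_filter.mp hb).2
        omega)]
      congr 1
      ext t
      simp only [Finset.mem_filter, Finset.mem_union]
      constructor
      · rintro ⟨htm, hlt⟩
        rcases eq_or_lt_of_le (by omega : ℓ ≤ taskLen q E t) with heq | hgt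
        · exact Or.inr ⟨htm, heq.symm⟩
        · exact Or.inl ⟨htm, hgt⟩
      · rintro (⟨htm, hh⟩ | ⟨htm, hh⟩) <;> exact ⟨htm, by omega⟩
    have hsplitY : (Ys.filter (fun t => 2*A - ℓ ≤ taskLen q E t)).card
        = (Ys.filter (fun t => 2*A - (ℓ-1) ≤ taskLen q E t)).card
          + (Ys.filter (fun t => taskLen q E t = 2*A - ℓ)).card := by
      rw [← Finset.card_union_of_disjoint (by
        rw [Finset.disjoint_left]
        intro a ha hb
        have h1 := (Finset.mem_filter.mp ha).2
        have h2 := (Finset.mem_filter.mp hb).2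
        omega)]
      congr 1
      ext t
      simp only [Finset.mem_filter, Finset.mem_union]
      constructor
      · rintro ⟨htm, hlt⟩
        rcases eq_or_lt_of_le hlt with heq | hgt
        · exact Or.inr ⟨htm, heq.symm⟩
        · exact Or.inl ⟨htm, by omega⟩
      · rintro (⟨htm, hh⟩ | ⟨htm, hh⟩) <;> exact ⟨htm, by omega⟩
    omega
  -- identify the elements of the right group via sum_four
  have hYsubT : Ys ⊆ T := Finset.filter_subset _ _
  have hXsubT : Xs ⊆ T := Finset.filter_subset _ _
  have hinjY : ∀ t1 ∈ Ys, ∀ t2 ∈ Ys, t1.1 = t2.1 → t1 = t2 := by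
    intro t1 h1 t2 h2 hfst
    have hb1 := hYsR t1 h1
    have hb2 := hYsR t2 h2
    rcases t1 with ⟨u1, s1⟩; rcases t2 with ⟨u2, s2⟩
    simp only at hfst hb1 hb2
    rw [hfst, hb1, hb2]
  have hUYcard : (Ys.image Prod.fst).card = 4 := by
    rw [Finset.card_image_of_injOn (fun t1 h1 t2 h2 hf => hinjY t1 h1 t2 h2 hf), hYcard]
  have hUYval : ∀ u ∈ Ys.image Prod.fst, validElem q E u := by
    intro u hu
    obtain ⟨t, ht, rfl⟩ := Finset.mem_image.mp hu
    exact hvalid t (hTsub (hYsubT ht))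
  have hUYsum : ∑ u ∈ Ys.image Prod.fst, elemVal q u = 0 := by
    rw [Finset.sum_image (fun t1 h1 t2 h2 hf => hinjY t1 h1 t2 h2 hf)]
    exact hYsum
  obtain ⟨hh, hhE, hUYeq⟩ := SpanAux.sum_four q E hE (Ys.image Prod.fst) hUYcard hUYval hUYsum
  -- the left group is the mirror image of the right group
  have hpair : ∀ t' ∈ Ys, (t'.1, true) ∈ Xs := by
    intro t' ht'
    have hl' := hlenb t' (hYsubT ht')
    have hb' := hYsR t' ht'
    have hL'eq : taskLen q E t' = A + 10 * elemVal q t'.1 := by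
      rw [taskLen, if_neg (by rw [hb']; simp)]
    have hcnt := hcount (2*A - taskLen q E t') (by omega) (by omega)
    have hmem' : t' ∈ Ys.filter (fun t => taskLen q E t = 2*A - (2*A - taskLen q E t')) :=
      Finset.mem_filter.mpr ⟨ht', by ring⟩
    have hpos : 0 < (Ys.filter (fun t => taskLen q E t = 2*A - (2*A - taskLen q E t'))).card :=
      Finset.card_pos.mpr ⟨t', hmem'⟩
    rw [← hcnt] at hpos
    obtain ⟨t, htmem⟩ := Finset.card_pos.mp hpos
    obtain ⟨htX, htL⟩ := Finset.mem_filter.mp htmem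
    have hvalid_t : validElem q E t.1 := hvalid t (hTsub (hXsubT htX))
    have hvalid_t' : validElem q E t'.1 := hvalid t' (hTsub (hYsubT ht'))
    rcases hbt : t.2 with _ | _
    · exfalso
      have hLt : taskLen q E t = A + 10 * elemVal q t.1 := by
        rw [taskLen, if_neg (by rw [hbt]; simp)]
      have hneg : elemVal q t.1 + elemVal q t'.1 = 0 := by omega
      exact SpanAux.no_neg q t.1 t'.1 hneg
    · have hLt : taskLen q E t = A - 10 * elemVal q t.1 := by
        rw [taskLen, if_pos (by rw [hbt])]
      have heqv : elemVal q t.1 = elemVal q t'.1 := by omega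
      have heq1 := SpanAux.elemVal_inj q E hE _ _ hvalid_t hvalid_t' heqv
      have hteq : t = (t'.1, true) := by
        rcases t with ⟨u, s⟩
        simp only at heq1 hbt
        rw [heq1, hbt]
      rwa [hteq] at htX
  have hXeqimg : Ys.image (fun t' => (t'.1, true)) = Xs := by
    apply Finset.eq_of_subset_of_card_le
    · intro x hx
      obtain ⟨t', ht', rfl⟩ := Finset.mem_image.mp hx
      exact hpair t' ht'
    · rw [Finset.card_image_of_injOn (fun t1 h1 t2 h2 hf => by
        have : t1.1 = t2.1 := by simpa using congrArg Prod.fst hf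
        exact hinjY t1 h1 t2 h2 this), hYcard, hXcard]
  -- final assembly
  refine ⟨hh, hhE, ?_⟩
  have hsubT : T ⊆ edgeTasks hh := by
    intro t ht
    rw [← hXYunion] at ht
    rcases Finset.mem_union.mp ht with htX | htY
    · rw [← hXeqimg] at htX
      obtain ⟨t', ht', rfl⟩ := Finset.mem_image.mp htX
      have hu : t'.1 ∈ Ys.image Prod.fst := Finset.mem_image_of_mem _ ht'
      rw [hUYeq] at hu
      simp only [Finset.mem_insert, Finset.mem_singleton] at hu
      rcases hu with h | h | h | h <;> rw [h] <;> simp [edgeTasks]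
    · have hb2 := hYsR t htY
      have hu : t.1 ∈ Ys.image Prod.fst := Finset.mem_image_of_mem _ htY
      rw [hUYeq] at hu
      simp only [Finset.mem_insert, Finset.mem_singleton] at hu
      have hteq : t = (t.1, false) := by
        rcases t with ⟨u, s⟩; simp only at hb2; rw [hb2]
      rw [hteq]
      rcases hu with h | h | h | h <;> rw [h] <;> simp [edgeTasks]
  have hinsle : ∀ (a : UTask) (s : Finset UTask) (n : ℕ), s.card ≤ n → (insert a s).card ≤ n+1 :=
    fun a s n h => le_trans (Finset.card_insert_le _ _) (by omega)
  have hcardET : (edgeTasks hh).card ≤ 8 := by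
    rw [edgeTasks]
    exact hinsle _ _ 7 (hinsle _ _ 6 (hinsle _ _ 5 (hinsle _ _ 4 (hinsle _ _ 3
      (hinsle _ _ 2 (hinsle _ _ 1 (by simp)))))))
  exact Finset.eq_of_subset_of_card_le hsubT (by omega)
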